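/- Let (Ω, ℱ, P) be a probability space, τ > 0, and T, C : Ω → ℝ independent random variables with 0 ≤ T ≤ τ almost everywhere. Define G : ℝ → ℝ by G(t) = P(C ≥ t) and suppose G(τ) > 0. Let Y = min(T, C) and Δ = 1{T ≤ C}. Then E[Δ·Y/G(Y)] = E[T]. -/

import Mathlib

open MeasureTheory ProbabilityTheory

/-- unbiasedness of inverse probability of censoring weighting
(IPCW): `E[Δ·Y/G(Y)] = E[T]` where `Y = min(T, C)`, `Δ = 1{T ≤ C}` and
`G(t) = P(C ≥ t)` with `G(τ) > 0`. -/
theorem ipcw_unbiased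
    {Ω : Type*} {ℱ : MeasurableSpace Ω} (P : Measure Ω) [IsProbabilityMeasure P]
    (τ : ℝ) (hτ : 0 < τ)
    (T C : Ω → ℝ) (hT : Measurable T) (hC : Measurable C)
    (hIndep : IndepFun T C P)
    (hT0 : ∀ᵐ ω ∂P, 0 ≤ T ω) (hTτ : ∀ᵐ ω ∂P, T ω ≤ τ)
    (G : ℝ → ℝ) (hG : ∀ t, G t = (P {ω | t ≤ C ω}).toReal) (hGτ : 0 < G τ)
    (Y : Ω → ℝ) (hY : ∀ ω, Y ω = min (T ω) (C ω))
    (Δ : Ω → ℝ) (hΔ : ∀ ω, Δ ω = if T ω ≤ C ω then (1 : ℝ) else 0) :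
    ∫ ω, Δ ω * Y ω / G (Y ω) ∂P = ∫ ω, T ω ∂P := by
  set μ := P.map T with hμdef
  set ν := P.map C with hνdef
  have hμprob : IsProbabilityMeasure μ := Measure.isProbabilityMeasure_map hT.aemeasurable
  have hνprob : IsProbabilityMeasure ν := Measure.isProbabilityMeasure_map hC.aemeasurable
  have hGanti : Antitone G := by
    intro s t hst
    rw [hG, hG]
    exact ENNReal.toReal_mono (measure_ne_top _ _)
      (measure_mono fun ω hω => le_trans hst hω)
  have hGmeas : Measurable G := hGanti.measurable
  have hG0 : ∀ t, t ≤ τ → 0 < G t := fun t ht => lt_of_lt_of_le hGτ (hGanti ht)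
  set f : ℝ × ℝ → ℝ := fun p => if p.1 ≤ p.2 then p.1 / G p.1 else 0 with hfdef
  have hf_meas : Measurable f :=
    Measurable.ite (measurableSet_le measurable_fst measurable_snd)
      (measurable_fst.div (hGmeas.comp measurable_fst)) measurable_const
  have hmap : P.map (fun ω => (T ω, C ω)) = μ.prod ν :=
    (indepFun_iff_map_prod_eq_prod_map_map hT.aemeasurable hC.aemeasurable).mp hIndep
  -- a.e. bound on the first coordinate
  have hA : μ {t : ℝ | ¬ (0 ≤ t ∧ t ≤ τ)} = 0 := by
    rw [hμdef, Measure.map_apply hT]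
    · have : ∀ᵐ ω ∂P, T ω ∈ {t : ℝ | 0 ≤ t ∧ t ≤ τ} := hT0.and hTτ
      simpa [ae_iff] using this
    · have : {t : ℝ | ¬ (0 ≤ t ∧ t ≤ τ)} = (Set.Icc 0 τ)ᶜ := by
        ext t; simp [Set.mem_Icc]
      rw [this]; exact measurableSet_Icc.compl
  have hae1 : ∀ᵐ p ∂(μ.prod ν), 0 ≤ p.1 ∧ p.1 ≤ τ := by
    rw [ae_iff]
    have hsub : {p : ℝ × ℝ | ¬ (0 ≤ p.1 ∧ p.1 ≤ τ)} =
        {t : ℝ | ¬ (0 ≤ t ∧ t ≤ τ)} ×ˢ (Set.univ : Set ℝ) := by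
      ext p; simp
    rw [hsub, Measure.prod_prod, hA, zero_mul]
  have hbound : ∀ᵐ p ∂(μ.prod ν), ‖f p‖ ≤ τ / G τ := by
    refine hae1.mono fun p hp => ?_
    by_cases h : p.1 ≤ p.2
    · have hGp : 0 < G p.1 := hG0 _ hp.2
      have : f p = p.1 / G p.1 := by simp [hfdef, h]
      rw [this, Real.norm_eq_abs, abs_of_nonneg (div_nonneg hp.1 hGp.le)]
      exact div_le_div₀ hτ.le hp.2 hGτ (hGanti hp.2)
    · have : f p = 0 := by simp [hfdef, h]
      rw [this, norm_zero]
      exact div_nonneg hτ.le hGτ.le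
  have hf_int : Integrable f (μ.prod ν) :=
    (integrable_const (τ / G τ)).mono' hf_meas.aestronglyMeasurable hbound
  have hμae : ∀ᵐ t ∂μ, t ≤ τ := by
    rw [hμdef]
    exact (ae_map_iff hT.aemeasurable measurableSet_Iic).mpr hTτ
  calc ∫ ω, Δ ω * Y ω / G (Y ω) ∂P
      = ∫ ω, f (T ω, C ω) ∂P := by
        refine integral_congr_ae (Filter.Eventually.of_forall fun ω => ?_)
        by_cases h : T ω ≤ C ω
        · simp [hfdef, hΔ, hY, h, min_eq_left h]
        · simp [hfdef, hΔ, hY, h]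
    _ = ∫ p, f p ∂(μ.prod ν) := by
        rw [← hmap, integral_map (hT.prodMk hC).aemeasurable hf_meas.aestronglyMeasurable]
    _ = ∫ t, ∫ c, f (t, c) ∂ν ∂μ := integral_prod f hf_int
    _ = ∫ t, (t / G t) * G t ∂μ := by
        refine integral_congr_ae (Filter.Eventually.of_forall fun t => ?_)
        have hind : (fun c => f (t, c)) =
            Set.indicator (Set.Ici t) (fun _ => t / G t) := by
          ext c
          by_cases h : t ≤ c
          · simp [hfdef, h, Set.indicator_of_mem (Set.mem_Ici.mpr h)]
          · simp [hfdef, h, Set.indicator_of_notMem (fun hc => h (Set.mem_Ici.mp hc))]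
        show (∫ c, f (t, c) ∂ν) = t / G t * G t
        rw [hind, integral_indicator_const _ measurableSet_Ici, hνdef,
          Measure.real, Measure.map_apply hC measurableSet_Ici]
        have hpre : C ⁻¹' Set.Ici t = {ω | t ≤ C ω} := rfl
        rw [hpre, smul_eq_mul, mul_comm, hG t]
    _ = ∫ t, t ∂μ := by
        refine integral_congr_ae (hμae.mono fun t ht => ?_)
        exact div_mul_cancel₀ t (hG0 t ht).ne'
    _ = ∫ ω, T ω ∂P := integral_map hT.aemeasurable aestronglyMeasurable_id
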